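/- Among the n^{n−2} labelled trees on n vertices, the proportion whose maximum degree exceeds k is at most 2n/k!, for any integer k ≥ 0. Equivalently, the number of labelled trees on n vertices having some vertex of degree greater than k is at most (2n/k!) · n^{n−2}. -/

import Mathlib

open Finset
open scoped Classical

variable {α : Type} [Fintype α] {G : SimpleGraph α}

lemma my_degree_pos (hG : G.Connected) (h2 : 2 ≤ Fintype.card α) (v : α) :
    0 < G.degree v := by
  rw [SimpleGraph.degree_pos_iff_exists_adj]
  obtain ⟨w, hw⟩ := Fintype.exists_ne_of_one_lt_card h2 v
  obtain ⟨p⟩ := hG.preconnected v w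
  cases p with
  | nil => exact absurd rfl hw.symm.elim
  | cons h q => exact ⟨_, h⟩

lemma my_exists_leaf (hG : G.IsTree) (h2 : 2 ≤ Fintype.card α) :
    ∃ v, G.degree v = 1 := by
  by_contra hc
  push_neg at hc
  have h1 : ∀ v, 2 ≤ G.degree v := by
    intro v
    have := my_degree_pos hG.isConnected h2 v
    have := hc v
    omega
  have hsum : ∑ v, G.degree v = 2 * #G.edgeFinset :=
    SimpleGraph.sum_degrees_eq_twice_card_edges G
  have hcard := hG.card_edgeFinset
  have : ∑ v : α, 2 ≤ ∑ v, G.degree v := Finset.sum_le_sum fun v _ => h1 v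
  simp only [Finset.sum_const, Finset.card_univ, smul_eq_mul] at this
  omega

lemma my_degree_eq_one_of_card_two (hG : G.IsTree) (h2 : Fintype.card α = 2) (v : α) :
    G.degree v = 1 := by
  have hpos := my_degree_pos hG.isConnected h2.ge v
  obtain ⟨w, hw⟩ := Fintype.exists_ne_of_one_lt_card h2.ge v
  have hpos' := my_degree_pos hG.isConnected h2.ge w
  have huniv : (Finset.univ : Finset α) = {v, w} := by
    apply (Finset.eq_of_subset_of_card_le (Finset.subset_univ _) _).symm
    rw [Finset.card_univ, h2, Finset.card_insert_of_notMem (by simp [hw.symm])]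
    simp
  have hsum : ∑ x, G.degree x = 2 * #G.edgeFinset :=
    SimpleGraph.sum_degrees_eq_twice_card_edges G
  have hcard := hG.card_edgeFinset
  rw [huniv, Finset.sum_pair hw.symm] at hsum
  omega

lemma my_adj_of_card_two (hG : G.IsTree) (h2 : Fintype.card α = 2) {a b : α}
    (hab : a ≠ b) : G.Adj a b := by
  obtain ⟨p⟩ := hG.isConnected.preconnected a b
  cases p with
  | nil => exact absurd rfl hab
  | @cons _ c _ h q =>
    have hc : c = b := by
      by_contra hcb
      have : Fintype.card α ≥ 3 := by
        have : ({a, b, c} : Finset α).card ≤ Fintype.card α := by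
          rw [← Finset.card_univ]; exact Finset.card_le_card (Finset.subset_univ _)
        rw [Finset.card_insert_of_notMem (by simp [hab, h.ne]),
          Finset.card_insert_of_notMem (by simp [Ne.symm hcb])] at this
        simpa using this
      omega
    exact hc ▸ h

lemma my_graph_eq_of_card_le_one (h1 : Fintype.card α ≤ 1) (G₁ G₂ : SimpleGraph α) :
    G₁ = G₂ := by
  have : Subsingleton α := by
    rcases Fintype.card_le_one_iff_subsingleton.mp h1 with h; exact h
  ext a b
  have : a = b := Subsingleton.elim a b
  simp [this]

lemma my_induce_degree (s : Set α) (x : ↥s) :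
    (G.induce s).degree x = ((G.neighborFinset x.1).filter (· ∈ s)).card := by
  rw [← SimpleGraph.card_neighborFinset_eq_degree]
  apply Finset.card_bij (fun y _ => (y : ↥s).1)
  · rintro y hmem
    simp only [SimpleGraph.mem_neighborFinset] at hmem
    simp only [Finset.mem_filter, SimpleGraph.mem_neighborFinset]
    exact ⟨hmem, y.2⟩
  · rintro y₁ - y₂ - h
    exact Subtype.ext h
  · intro y hy
    simp only [Finset.mem_filter, SimpleGraph.mem_neighborFinset] at hy
    exact ⟨⟨y, hy.2⟩, by simp [SimpleGraph.mem_neighborFinset, hy.1], rfl⟩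

lemma my_induce_acyclic (hG : G.IsAcyclic) (s : Set α) :
    (G.induce s).IsAcyclic := by
  intro v c hc
  exact hG (c.map (SimpleGraph.Embedding.induce (G := G) s).toHom)
    (hc.map (SimpleGraph.Embedding.induce (G := G) s).injective)
lemma my_not_mem_path_support {ℓ : α} (hdeg : G.degree ℓ = 1) :
    ∀ {a b : α} (p : G.Walk a b), p.IsPath → a ≠ ℓ → b ≠ ℓ → ℓ ∉ p.support := by
  intro a b p
  induction p with
  | nil => intro _ ha _ h; simp at h; exact ha h.symm
  | @cons a c b h q ih =>
    intro hp ha hb hmem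
    rw [SimpleGraph.Walk.support_cons, List.mem_cons] at hmem
    rcases hmem with h1 | h2
    · exact ha h1.symm
    · by_cases hc : c = ℓ
      · subst hc
        cases q with
        | nil => exact hb rfl
        | @cons _ d _ h' q' =>
          have hd : d ∈ (SimpleGraph.Walk.cons h' q').support := by
            rw [SimpleGraph.Walk.support_cons]
            exact List.mem_cons_of_mem _ q'.start_mem_support
          have had : a ≠ d := by
            rw [SimpleGraph.Walk.cons_isPath_iff] at hp
            rintro rfl
            exact hp.2 hd
          have hsub : ({a, d} : Finset α) ⊆ G.neighborFinset c := by
            intro x hx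
            simp only [Finset.mem_insert, Finset.mem_singleton] at hx
            rcases hx with rfl | rfl
            · simpa [SimpleGraph.mem_neighborFinset] using h.symm
            · simpa [SimpleGraph.mem_neighborFinset] using h'
          have h2le : 2 ≤ G.degree c := by
            rw [← SimpleGraph.card_neighborFinset_eq_degree]
            calc 2 = ({a, d} : Finset α).card := by
                  rw [Finset.card_insert_of_notMem (by simpa using had)]; simp
              _ ≤ _ := Finset.card_le_card hsub
          omega
      · exact ih hp.of_cons hc hb h2

lemma my_delete_leaf_connected (hG : G.IsTree) {ℓ : α} (hdeg : G.degree ℓ = 1) :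
    (G.induce {x | x ≠ ℓ}).Connected := by
  have hne : Nonempty {x : α // x ∈ {y | y ≠ ℓ}} := by
    have : 0 < G.degree ℓ := by omega
    obtain ⟨w, hw⟩ := (SimpleGraph.degree_pos_iff_exists_adj G ℓ).mp this
    exact ⟨⟨w, hw.ne'⟩⟩
  rw [SimpleGraph.connected_iff]
  refine ⟨?_, hne⟩
  rintro ⟨a, ha⟩ ⟨b, hb⟩
  obtain ⟨p, hp⟩ := (hG.existsUnique_path a b).exists
  have hsupp : ∀ x ∈ p.support, x ≠ ℓ := by
    intro x hx hxe
    exact my_not_mem_path_support hdeg p hp ha hb (hxe ▸ hx)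
  clear hp
  induction p with
  | nil => rfl
  | @cons a c b h q ih =>
    have hc : c ≠ ℓ := hsupp c (by simp)
    have step : (G.induce {x | x ≠ ℓ}).Adj ⟨a, ha⟩ ⟨c, hc⟩ := by
      simp only [SimpleGraph.comap_adj, Function.Embedding.coe_subtype]
      exact h
    exact step.reachable.trans (ih hc hb (fun y hy => hsupp y (by simp [hy])))

lemma my_delete_leaf_tree (hG : G.IsTree) {ℓ : α} (hdeg : G.degree ℓ = 1) :
    (G.induce {x | x ≠ ℓ}).IsTree :=
  ⟨my_delete_leaf_connected hG hdeg, my_induce_acyclic hG.IsAcyclic _⟩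
section Prufer
variable {α : Type} [Fintype α] [LinearOrder α]

/-- The smallest leaf of a tree with at least two vertices. -/
noncomputable def treeLeaf (G : SimpleGraph α) (hG : G.IsTree) (h2 : 2 ≤ Fintype.card α) : α :=
  (Finset.univ.filter fun v => G.degree v = 1).min' (by
    obtain ⟨v, hv⟩ := my_exists_leaf hG h2
    exact ⟨v, by simp [hv]⟩)

lemma treeLeaf_degree (G : SimpleGraph α) (hG : G.IsTree) (h2 : 2 ≤ Fintype.card α) :
    G.degree (treeLeaf G hG h2) = 1 := by
  have := Finset.min'_mem (Finset.univ.filter fun v => G.degree v = 1) (by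
    obtain ⟨v, hv⟩ := my_exists_leaf hG h2
    exact ⟨v, by simp [hv]⟩)
  unfold treeLeaf; convert (Finset.mem_filter.mp this).2

/-- The unique neighbor of the smallest leaf. -/
noncomputable def leafNbr (G : SimpleGraph α) (hG : G.IsTree) (h2 : 2 ≤ Fintype.card α) : α :=
  (G.neighborFinset (treeLeaf G hG h2)).min' (by
    rw [← Finset.card_pos, SimpleGraph.card_neighborFinset_eq_degree, treeLeaf_degree]
    omega)

lemma neighborFinset_treeLeaf (G : SimpleGraph α) (hG : G.IsTree) (h2 : 2 ≤ Fintype.card α) :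
    G.neighborFinset (treeLeaf G hG h2) = {leafNbr G hG h2} := by
  have h1 : (G.neighborFinset (treeLeaf G hG h2)).card = 1 := by
    rw [SimpleGraph.card_neighborFinset_eq_degree, treeLeaf_degree]
  obtain ⟨a, ha⟩ := Finset.card_eq_one.mp h1
  have : leafNbr G hG h2 ∈ G.neighborFinset (treeLeaf G hG h2) := Finset.min'_mem _ _
  rw [ha] at this ⊢
  simp only [Finset.mem_singleton] at this
  rw [this]

lemma leafNbr_ne (G : SimpleGraph α) (hG : G.IsTree) (h2 : 2 ≤ Fintype.card α) :
    leafNbr G hG h2 ≠ treeLeaf G hG h2 := by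
  have : leafNbr G hG h2 ∈ G.neighborFinset (treeLeaf G hG h2) := Finset.min'_mem _ _
  rw [SimpleGraph.mem_neighborFinset] at this
  exact this.ne'

/-- The Prüfer code of a tree. -/
noncomputable def prufer : (α : Type) → [Fintype α] → [LinearOrder α] →
    (G : SimpleGraph α) → (hG : G.IsTree) → List α
  | α, _, _, G, hG =>
    if h : 2 < Fintype.card α then
      leafNbr G hG (by omega) ::
        (prufer ↥{y : α | y ≠ treeLeaf G hG (by omega)}
          (G.induce {y : α | y ≠ treeLeaf G hG (by omega)})
          (my_delete_leaf_tree hG (treeLeaf_degree G hG (by omega)))).map Subtype.val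
    else []
  termination_by α _ _ _ _ => Fintype.card α
  decreasing_by
    exact Fintype.card_subtype_lt (x := treeLeaf G hG (by omega)) (by simp)

end Prufer
section PruferLemmas
variable {α : Type} [Fintype α] [LinearOrder α]

lemma card_subtype_ne (ℓ : α) :
    Fintype.card ↥{x : α | x ≠ ℓ} + 1 = Fintype.card α := by
  have h1 : Fintype.card ↥{x : α | x ≠ ℓ} = Fintype.card {y : α // ¬ (y = ℓ)} :=
    Fintype.card_congr (Equiv.refl _)
  rw [h1, Fintype.card_subtype_compl, Fintype.card_subtype_eq]
  have : 1 ≤ Fintype.card α := Fintype.card_pos_iff.mpr ⟨ℓ⟩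
  omega

lemma prufer_eq_nil (G : SimpleGraph α) (hG : G.IsTree) (h : ¬ 2 < Fintype.card α) :
    prufer α G hG = [] := by
  rw [prufer]
  simp [h]

lemma prufer_eq_cons (G : SimpleGraph α) (hG : G.IsTree) (h : 2 < Fintype.card α)
    (h2 : 2 ≤ Fintype.card α) :
    prufer α G hG = leafNbr G hG h2 ::
        (prufer ↥{y : α | y ≠ treeLeaf G hG h2}
          (G.induce {y : α | y ≠ treeLeaf G hG h2})
          (my_delete_leaf_tree hG (treeLeaf_degree G hG h2))).map Subtype.val := by
  rw [prufer, dif_pos h]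

lemma prufer_length (n : ℕ) :
    ∀ (α : Type) [Fintype α] [LinearOrder α] (G : SimpleGraph α) (hG : G.IsTree),
      Fintype.card α = n → 2 ≤ n → (prufer α G hG).length + 2 = n := by
  induction n using Nat.strong_induction_on with
  | _ n ih =>
    intro α _ _ G hG hcard h2
    by_cases h : 2 < Fintype.card α
    · have h2' : 2 ≤ Fintype.card α := by omega
      rw [prufer_eq_cons G hG h h2']
      have hsub := card_subtype_ne (treeLeaf G hG h2')
      have := ih (n - 1) (by omega) _ (G.induce {y : α | y ≠ treeLeaf G hG h2'})
        (my_delete_leaf_tree hG (treeLeaf_degree G hG h2')) (by omega) (by omega)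
      simp only [List.length_cons, List.length_map]
      omega
    · rw [prufer_eq_nil G hG h]
      simp only [List.length_nil]
      omega

end PruferLemmas
section PruferCount
variable {α : Type} [Fintype α] [LinearOrder α]

lemma degree_induce_erase {G : SimpleGraph α} (ℓ : α) (x : ↥{y : α | y ≠ ℓ}) :
    (G.induce {y : α | y ≠ ℓ}).degree x = ((G.neighborFinset x.1).erase ℓ).card := by
  rw [← SimpleGraph.card_neighborFinset_eq_degree]
  apply Finset.card_bij (fun y _ => (y : ↥{y : α | y ≠ ℓ}).1)
  · rintro y hmem
    simp only [SimpleGraph.mem_neighborFinset] at hmem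
    simp only [Finset.mem_erase, SimpleGraph.mem_neighborFinset]
    exact ⟨y.2, hmem⟩
  · rintro y₁ - y₂ - hh
    exact Subtype.ext hh
  · intro y hy
    simp only [Finset.mem_erase, SimpleGraph.mem_neighborFinset] at hy
    exact ⟨⟨y, hy.1⟩, by simp [SimpleGraph.mem_neighborFinset, hy.2], rfl⟩

lemma prufer_count (n : ℕ) :
    ∀ (α : Type) [Fintype α] [LinearOrder α] (G : SimpleGraph α) (hG : G.IsTree),
      Fintype.card α = n → 2 ≤ n → ∀ v : α, (prufer α G hG).count v + 1 = G.degree v := by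
  induction n using Nat.strong_induction_on with
  | _ n ih =>
    intro α _ _ G hG hcard h2 v
    by_cases h : 2 < Fintype.card α
    · have h2' : 2 ≤ Fintype.card α := by omega
      rw [prufer_eq_cons G hG h h2']
      set ℓ := treeLeaf G hG h2' with hℓ
      set u := leafNbr G hG h2' with hu
      set T' := G.induce {y : α | y ≠ ℓ}
      set tl := prufer ↥{y : α | y ≠ ℓ} T' (my_delete_leaf_tree hG (treeLeaf_degree G hG h2'))
      have hsub := card_subtype_ne ℓ
      by_cases hvℓ : v = ℓ
      · have hcnt : (tl.map Subtype.val).count v = 0 := by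
          rw [List.count_eq_zero]
          intro hmem
          obtain ⟨⟨y, hy⟩, -, rfl⟩ := List.mem_map.mp hmem
          exact hy hvℓ
        have hdegv : G.degree v = 1 := by rw [hvℓ]; exact treeLeaf_degree G hG h2'
        have hvune : u ≠ v := by rw [hvℓ]; exact leafNbr_ne G hG h2'
        rw [List.count_cons, hcnt]
        simp only [beq_iff_eq]
        rw [if_neg hvune, hdegv]
      · have hcnt : (tl.map Subtype.val).count v =
            tl.count ⟨v, hvℓ⟩ := by
          have := List.count_map_of_injective (x := (⟨v, hvℓ⟩ : ↥{y : α | y ≠ ℓ})) tl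
            Subtype.val Subtype.val_injective
          simpa using this
        have hih := ih (n - 1) (by omega) _ T'
          (my_delete_leaf_tree hG (treeLeaf_degree G hG h2')) (by omega) (by omega)
          ⟨v, hvℓ⟩
        replace hih : tl.count ⟨v, hvℓ⟩ + 1 = ((G.neighborFinset v).erase ℓ).card := by
          rw [← degree_induce_erase ℓ ⟨v, hvℓ⟩]; convert hih
        have hih2 : tl.count ⟨v, hvℓ⟩ + 1 = ((G.neighborFinset v).erase ℓ).card := hih
        clear hih
        rw [List.count_cons, hcnt]
        simp only [beq_iff_eq]
        by_cases hvu : u = v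
        · have hadj : ℓ ∈ G.neighborFinset v := by
            rw [SimpleGraph.mem_neighborFinset]
            have hadj2 : G.Adj ℓ u := by
              have hm := Finset.min'_mem (G.neighborFinset ℓ) (by
                rw [← Finset.card_pos, SimpleGraph.card_neighborFinset_eq_degree,
                  treeLeaf_degree]
                omega)
              rwa [SimpleGraph.mem_neighborFinset] at hm
            exact hvu ▸ hadj2.symm
          have herase := Finset.card_erase_add_one hadj
          rw [if_pos hvu, ← SimpleGraph.card_neighborFinset_eq_degree]
          omega
        · have hnadj : ℓ ∉ G.neighborFinset v := by
            rw [SimpleGraph.mem_neighborFinset]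
            intro hadj
            have hv2 : v ∈ G.neighborFinset ℓ := by
              rw [SimpleGraph.mem_neighborFinset]; exact hadj.symm
            rw [neighborFinset_treeLeaf G hG h2'] at hv2
            simp only [Finset.mem_singleton] at hv2
            exact hvu hv2.symm
          rw [Finset.erase_eq_of_notMem hnadj] at hih2
          rw [if_neg hvu, ← SimpleGraph.card_neighborFinset_eq_degree]
          omega
    · have hc2 : Fintype.card α = 2 := by omega
      rw [prufer_eq_nil G hG h]
      simp only [List.count_nil]
      rw [my_degree_eq_one_of_card_two hG hc2 v]
end PruferCount

section PruferInj
variable {α : Type} [Fintype α] [LinearOrder α]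

lemma prufer_eq_cons' (G : SimpleGraph α) (hG : G.IsTree) (h : 2 < Fintype.card α)
    (h2 : 2 ≤ Fintype.card α) (ℓ : α) (hℓ : ℓ = treeLeaf G hG h2) (hdeg : G.degree ℓ = 1) :
    prufer α G hG = leafNbr G hG h2 ::
        (prufer ↥{y : α | y ≠ ℓ} (G.induce {y : α | y ≠ ℓ})
          (my_delete_leaf_tree hG hdeg)).map Subtype.val := by
  subst hℓ
  exact prufer_eq_cons G hG h h2

lemma prufer_injective (n : ℕ) :
    ∀ (α : Type) [Fintype α] [LinearOrder α] (G₁ G₂ : SimpleGraph α)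
      (h₁ : G₁.IsTree) (h₂ : G₂.IsTree), Fintype.card α = n →
      prufer α G₁ h₁ = prufer α G₂ h₂ → G₁ = G₂ := by
  induction n using Nat.strong_induction_on with
  | _ n ih =>
    intro α _ _ G₁ G₂ h₁ h₂ hcard hcode
    by_cases h : 2 < Fintype.card α
    · have h2' : 2 ≤ Fintype.card α := by omega
      have hcnt₁ := prufer_count n α G₁ h₁ hcard (by omega)
      have hcnt₂ := prufer_count n α G₂ h₂ hcard (by omega)
      have hset : (Finset.univ.filter fun v => G₁.degree v = 1)
          = (Finset.univ.filter fun v => G₂.degree v = 1) := by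
        ext v
        simp only [Finset.mem_filter, Finset.mem_univ, true_and]
        rw [← hcnt₁ v, ← hcnt₂ v, hcode]
      have hℓ2 : treeLeaf G₁ h₁ h2' = treeLeaf G₂ h₂ h2' := by
        rw [treeLeaf, treeLeaf]
        congr 1
      set ℓ := treeLeaf G₁ h₁ h2' with hℓdef
      have hdeg₁ : G₁.degree ℓ = 1 := treeLeaf_degree G₁ h₁ h2'
      have hdeg₂ : G₂.degree ℓ = 1 := by rw [hℓ2]; exact treeLeaf_degree G₂ h₂ h2'
      rw [prufer_eq_cons' G₁ h₁ h h2' ℓ rfl hdeg₁,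
        prufer_eq_cons' G₂ h₂ h h2' ℓ hℓ2 hdeg₂] at hcode
      rw [List.cons.injEq] at hcode
      obtain ⟨hu, htl⟩ := hcode
      have htl' : prufer ↥{y : α | y ≠ ℓ} (G₁.induce {y : α | y ≠ ℓ})
            (my_delete_leaf_tree h₁ hdeg₁)
          = prufer ↥{y : α | y ≠ ℓ} (G₂.induce {y : α | y ≠ ℓ})
            (my_delete_leaf_tree h₂ hdeg₂) :=
        List.map_injective_iff.mpr Subtype.val_injective htl
      have hsub := card_subtype_ne ℓ
      have hind := ih (n - 1) (by omega) _ _ _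
        (my_delete_leaf_tree h₁ hdeg₁) (my_delete_leaf_tree h₂ hdeg₂) (by omega) htl'
      set u := leafNbr G₁ h₁ h2' with hudef
      have hn₁ : G₁.neighborFinset ℓ = {u} := neighborFinset_treeLeaf G₁ h₁ h2'
      have hn₂ : G₂.neighborFinset ℓ = {u} := by
        have := neighborFinset_treeLeaf G₂ h₂ h2'
        rw [← hℓ2] at this
        rw [this, hu]
      have hadj₁ : ∀ c, G₁.Adj ℓ c ↔ c = u := fun c => by
        rw [← SimpleGraph.mem_neighborFinset, hn₁, Finset.mem_singleton]
      have hadj₂ : ∀ c, G₂.Adj ℓ c ↔ c = u := fun c => by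
        rw [← SimpleGraph.mem_neighborFinset, hn₂, Finset.mem_singleton]
      ext a b
      by_cases hab : a = b
      · subst hab; simp
      by_cases haℓ : a = ℓ
      · subst haℓ
        rw [hadj₁ b, hadj₂ b]
      by_cases hbℓ : b = ℓ
      · subst hbℓ
        rw [SimpleGraph.adj_comm, hadj₁ a, SimpleGraph.adj_comm G₂, hadj₂ a]
      · have key : (G₁.induce {y : α | y ≠ ℓ}).Adj ⟨a, haℓ⟩ ⟨b, hbℓ⟩
            ↔ (G₂.induce {y : α | y ≠ ℓ}).Adj ⟨a, haℓ⟩ ⟨b, hbℓ⟩ := by rw [hind]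
        simp only [SimpleGraph.comap_adj, Function.Embedding.coe_subtype] at key
        exact key
    · by_cases h1 : Fintype.card α ≤ 1
      · exact my_graph_eq_of_card_le_one h1 G₁ G₂
      · have hc2 : Fintype.card α = 2 := by omega
        ext a b
        by_cases hab : a = b
        · subst hab; simp
        · exact iff_of_true (my_adj_of_card_two h₁ hc2 hab) (my_adj_of_card_two h₂ hc2 hab)
end PruferInj

section Counting

lemma count_get {β : Type} [DecidableEq β] (l : List β) (v : β) :
    (Finset.univ.filter fun i : Fin l.length => l.get i = v).card = l.count v := by
  induction l with
  | nil => simp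
  | cons a t ihl =>
    rw [Finset.card_filter]
    simp only [List.length_cons]
    rw [Fin.sum_univ_succ]
    show (if a = v then 1 else 0) + ∑ i : Fin t.length, (if t.get i = v then 1 else 0) = _
    rw [← Finset.card_filter, ihl, List.count_cons]
    simp only [beq_iff_eq]
    by_cases hav : a = v
    · simp only [hav, if_true, if_pos rfl]
      omega
    · simp only [hav, if_false, if_neg (Ne.symm hav), if_neg hav]
      omega

lemma count_get_cast {β : Type} [DecidableEq β] (l : List β) {m : ℕ} (h : l.length = m) (v : β) :
    (Finset.univ.filter fun i : Fin m => l.get (Fin.cast h.symm i) = v).card = l.count v := by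
  subst h
  rw [← count_get l v]
  congr 1

lemma tuple_count_bound (m n k : ℕ) (v : Fin n) :
    (Finset.univ.filter fun f : Fin m → Fin n =>
        k ≤ (Finset.univ.filter fun i => f i = v).card).card
      ≤ Nat.choose m k * n ^ (m - k) := by
  classical
  have hsubset : (Finset.univ.filter fun f : Fin m → Fin n =>
        k ≤ (Finset.univ.filter fun i => f i = v).card)
      ⊆ (Finset.powersetCard k (Finset.univ : Finset (Fin m))).biUnion
          (fun P => Finset.univ.filter (fun f : Fin m → Fin n => ∀ i ∈ P, f i = v)) := by
    intro f hf
    simp only [Finset.mem_filter, Finset.mem_univ, true_and] at hf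
    obtain ⟨P, hPsub, hPcard⟩ := Finset.exists_subset_card_eq hf
    refine Finset.mem_biUnion.mpr ⟨P, Finset.mem_powersetCard.mpr ⟨Finset.subset_univ _, hPcard⟩, ?_⟩
    simp only [Finset.mem_filter, Finset.mem_univ, true_and]
    intro i hi
    exact (Finset.mem_filter.mp (hPsub hi)).2
  have hcard : ∀ P ∈ Finset.powersetCard k (Finset.univ : Finset (Fin m)),
      (Finset.univ.filter (fun f : Fin m → Fin n => ∀ i ∈ P, f i = v)).card = n ^ (m - k) := by
    intro P hP
    obtain ⟨-, hPcard⟩ := Finset.mem_powersetCard.mp hP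
    have hfil : (Finset.univ.filter (fun f : Fin m → Fin n => ∀ i ∈ P, f i = v))
        = Fintype.piFinset (fun i : Fin m => if i ∈ P then ({v} : Finset (Fin n)) else Finset.univ) := by
      ext f
      simp only [Finset.mem_filter, Finset.mem_univ, true_and, Fintype.mem_piFinset]
      constructor
      · intro hall i
        by_cases hi : i ∈ P
        · simp [hi, hall i hi]
        · simp [hi]
      · intro hall i hi
        have := hall i
        simpa [hi] using this
    rw [hfil, Fintype.card_piFinset]
    have : ∀ i : Fin m, (if i ∈ P then ({v} : Finset (Fin n)) else Finset.univ).card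
        = if i ∈ P then 1 else n := by
      intro i; split <;> simp
    rw [Finset.prod_congr rfl (fun i _ => this i)]
    rw [Finset.prod_ite]
    simp only [Finset.prod_const_one, Finset.prod_const, one_mul]
    rw [Finset.filter_not, Finset.filter_univ_mem,
      Finset.card_sdiff_of_subset (Finset.subset_univ _), Finset.card_univ, Fintype.card_fin, hPcard]
  calc (Finset.univ.filter fun f : Fin m → Fin n =>
        k ≤ (Finset.univ.filter fun i => f i = v).card).card
      ≤ _ := Finset.card_le_card hsubset
    _ ≤ ∑ P ∈ Finset.powersetCard k (Finset.univ : Finset (Fin m)),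
        (Finset.univ.filter (fun f : Fin m → Fin n => ∀ i ∈ P, f i = v)).card :=
        Finset.card_biUnion_le
    _ = ∑ P ∈ Finset.powersetCard k (Finset.univ : Finset (Fin m)), n ^ (m - k) :=
        Finset.sum_congr rfl hcard
    _ = Nat.choose m k * n ^ (m - k) := by
        rw [Finset.sum_const, Finset.card_powersetCard, Finset.card_univ, Fintype.card_fin,
          smul_eq_mul]
end Counting

lemma nat_card_subtype {γ : Type} [Fintype γ] (p : γ → Prop) [DecidablePred p] :
    Nat.card {x // p x} = (Finset.univ.filter p).card := by
  rw [Nat.card_eq_fintype_card, Fintype.card_subtype]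

/-- Fact (i) in the proof of Theorem 2.8(c): among the `n^{n-2}` labelled trees
on `n` vertices, the number having some vertex of degree greater than `k` is at
most `(2n/k!)·n^{n-2}`. -/
theorem stmt15 (n k : ℕ) :
    (Nat.card {T : SimpleGraph (Fin n) //
        T.IsTree ∧ ∃ v, k < Nat.card (T.neighborSet v)} : ℝ)
      ≤ 2 * (n : ℝ) / (k.factorial : ℝ) * (n : ℝ) ^ (n - 2) := by
  by_cases hn : 2 ≤ n
  · -- main case
    have hcardFin : Fintype.card (Fin n) = n := Fintype.card_fin n
    -- per-vertex bound
    have hinj : ∀ v : Fin n,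
        Nat.card {T : SimpleGraph (Fin n) // T.IsTree ∧ k < Nat.card (T.neighborSet v)}
          ≤ Nat.choose (n-2) k * n ^ (n-2-k) := by
      intro v
      have hdegeq : ∀ (T : SimpleGraph (Fin n)), Nat.card (T.neighborSet v) = T.degree v := by
        intro T
        rw [Nat.card_eq_fintype_card, SimpleGraph.card_neighborSet_eq_degree]
      have hlen : ∀ (T : SimpleGraph (Fin n)) (hT : T.IsTree),
          (prufer (Fin n) T hT).length = n - 2 := by
        intro T hT
        have := prufer_length n (Fin n) T hT hcardFin hn
        omega
      let enc : {T : SimpleGraph (Fin n) // T.IsTree ∧ k < Nat.card (T.neighborSet v)} →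
          {f : Fin (n-2) → Fin n // k ≤ (Finset.univ.filter fun i => f i = v).card} :=
        fun Tp =>
          ⟨fun i => (prufer (Fin n) Tp.1 Tp.2.1).get (Fin.cast (hlen Tp.1 Tp.2.1).symm i), by
            rw [count_get_cast (l := prufer (Fin n) Tp.1 Tp.2.1) (h := hlen Tp.1 Tp.2.1) (v := v)]
            have hc := prufer_count n (Fin n) Tp.1 Tp.2.1 hcardFin hn v
            have hc2 : (prufer (Fin n) Tp.1 Tp.2.1).count v + 1 = Tp.1.degree v := by
              convert hc using 4
            have hd := Tp.2.2
            rw [hdegeq Tp.1] at hd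
            omega⟩
      have hencinj : Function.Injective enc := by
        rintro ⟨T₁, hT₁, hd₁⟩ ⟨T₂, hT₂, hd₂⟩ hab
        have hfeq := congrArg Subtype.val hab
        simp only [enc] at hfeq
        have hcode : prufer (Fin n) T₁ hT₁ = prufer (Fin n) T₂ hT₂ := by
          apply List.ext_get
          · rw [hlen T₁ hT₁, hlen T₂ hT₂]
          · intro j hj₁ hj₂
            have hj : j < n - 2 := by rw [hlen T₁ hT₁] at hj₁; exact hj₁
            exact congrFun hfeq ⟨j, hj⟩
        have := prufer_injective n (Fin n) T₁ T₂ hT₁ hT₂ hcardFin hcode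
        exact Subtype.ext this
      calc Nat.card {T : SimpleGraph (Fin n) // T.IsTree ∧ k < Nat.card (T.neighborSet v)}
          ≤ Nat.card {f : Fin (n-2) → Fin n // k ≤ (Finset.univ.filter fun i => f i = v).card} :=
            Nat.card_le_card_of_injective enc hencinj
        _ = (Finset.univ.filter fun f : Fin (n-2) → Fin n =>
              k ≤ (Finset.univ.filter fun i => f i = v).card).card := nat_card_subtype _
        _ ≤ Nat.choose (n-2) k * n ^ (n-2-k) := tuple_count_bound (n-2) n k v
    -- union bound
    have hcount : Nat.card {T : SimpleGraph (Fin n) //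
          T.IsTree ∧ ∃ v, k < Nat.card (T.neighborSet v)}
        ≤ n * (Nat.choose (n-2) k * n ^ (n-2-k)) := by
      rw [nat_card_subtype]
      have hsub : (Finset.univ.filter (fun T : SimpleGraph (Fin n) =>
            T.IsTree ∧ ∃ v, k < Nat.card (T.neighborSet v)))
          ⊆ Finset.univ.biUnion (fun v : Fin n => Finset.univ.filter
              (fun T : SimpleGraph (Fin n) => T.IsTree ∧ k < Nat.card (T.neighborSet v))) := by
        intro T hT
        simp only [Finset.mem_filter, Finset.mem_univ, true_and] at hT
        obtain ⟨hT1, v, hv⟩ := hT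
        exact Finset.mem_biUnion.mpr ⟨v, Finset.mem_univ v,
          Finset.mem_filter.mpr ⟨Finset.mem_univ _, hT1, hv⟩⟩
      calc (Finset.univ.filter (fun T : SimpleGraph (Fin n) =>
            T.IsTree ∧ ∃ v, k < Nat.card (T.neighborSet v))).card
          ≤ _ := Finset.card_le_card hsub
        _ ≤ ∑ v : Fin n, (Finset.univ.filter
              (fun T : SimpleGraph (Fin n) => T.IsTree ∧ k < Nat.card (T.neighborSet v))).card :=
            Finset.card_biUnion_le
        _ ≤ ∑ _v : Fin n, Nat.choose (n-2) k * n ^ (n-2-k) := by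
            apply Finset.sum_le_sum
            intro v _
            rw [← nat_card_subtype]
            exact hinj v
        _ = n * (Nat.choose (n-2) k * n ^ (n-2-k)) := by
            rw [Finset.sum_const, Finset.card_univ, hcardFin, smul_eq_mul]
    -- arithmetic
    have hpow : Nat.choose (n-2) k * Nat.factorial k * n ^ (n-2-k) ≤ n ^ (n-2) := by
      by_cases hk : k ≤ n - 2
      · have h1 : Nat.choose (n-2) k * Nat.factorial k = (n-2).descFactorial k := by
          rw [Nat.descFactorial_eq_factorial_mul_choose]; ring
        rw [h1]
        calc (n-2).descFactorial k * n ^ (n-2-k)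
            ≤ (n-2)^k * n ^ (n-2-k) :=
              Nat.mul_le_mul_right _ (Nat.descFactorial_le_pow _ _)
          _ ≤ n^k * n ^ (n-2-k) :=
              Nat.mul_le_mul_right _ (Nat.pow_le_pow_left (by omega) _)
          _ = n ^ (n-2) := by rw [← pow_add]; congr 1; omega
      · rw [Nat.choose_eq_zero_of_lt (by omega)]
        simp
    have hfinal : Nat.card {T : SimpleGraph (Fin n) //
          T.IsTree ∧ ∃ v, k < Nat.card (T.neighborSet v)} * Nat.factorial k
        ≤ 2 * n * n ^ (n-2) := by
      calc Nat.card {T : SimpleGraph (Fin n) //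
            T.IsTree ∧ ∃ v, k < Nat.card (T.neighborSet v)} * Nat.factorial k
          ≤ (n * (Nat.choose (n-2) k * n ^ (n-2-k))) * Nat.factorial k :=
            Nat.mul_le_mul_right _ hcount
        _ = n * (Nat.choose (n-2) k * Nat.factorial k * n ^ (n-2-k)) := by ring
        _ ≤ n * n ^ (n-2) := Nat.mul_le_mul_left _ hpow
        _ ≤ 2 * n * n ^ (n-2) := by
            have : n * n ^ (n-2) ≤ 2 * (n * n ^ (n-2)) := Nat.le_mul_of_pos_left _ (by omega)
            calc n * n ^ (n-2) ≤ 2 * (n * n ^ (n-2)) := this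
              _ = 2 * n * n ^ (n-2) := by ring
    rw [div_mul_eq_mul_div, le_div_iff₀ (by positivity : (0:ℝ) < (k.factorial : ℝ))]
    calc (Nat.card {T : SimpleGraph (Fin n) //
          T.IsTree ∧ ∃ v, k < Nat.card (T.neighborSet v)} : ℝ) * (k.factorial : ℝ)
        ≤ ((2 * n * n ^ (n-2) : ℕ) : ℝ) := by exact_mod_cast hfinal
      _ = 2 * (n:ℝ) * (n:ℝ) ^ (n-2) := by push_cast; ring
  · -- n ≤ 1 : the set is empty
    have hempty : IsEmpty {T : SimpleGraph (Fin n) //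
        T.IsTree ∧ ∃ v, k < Nat.card (T.neighborSet v)} := by
      constructor
      rintro ⟨T, hT, v, hv⟩
      have hne : Nonempty (Fin n) := hT.isConnected.nonempty
      have hn1 : n = 1 := by
        have := Fintype.card_pos_iff.mpr hne
        rw [Fintype.card_fin] at this
        omega
      have hempty2 : T.neighborSet v = ∅ := by
        ext w
        simp only [SimpleGraph.mem_neighborSet, Set.mem_empty_iff_false, iff_false]
        intro hadj
        have hvw : v = w := by
          have h1 := v.isLt
          have h2 := w.isLt
          exact Fin.ext (by omega)
        exact hadj.ne hvw
      rw [hempty2] at hv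
      simp at hv
    rw [Nat.card_of_isEmpty, Nat.cast_zero]
    positivity
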